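/- Suppose ⟨x_m, ε_n⟩ = 0 for all m, n ∈ {1, …, N}. Then ‖θ_ELR − θ_ALR‖₂ ≤ (1/(N λ)) · ‖Σ_{n=1}^N ∂₁f(x_nᵀ θ_ELR, y_n) · ε_n‖₂, where ∂₁f denotes the derivative of f in its first argument. -/

import Mathlib

open Matrix BigOperators RealInnerProductSpace

theorem stmt_5
    (N D : ℕ) (hN : 1 ≤ N) (hD : 1 ≤ D)
    (x ε : Fin N → Fin D → ℝ) (y : Fin N → ℝ)
    (lam : ℝ) (hlam : 0 < lam)
    (f : ℝ → ℝ → ℝ)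
    (hconv : ∀ c : ℝ, ConvexOn ℝ Set.univ (fun z => f z c))
    (hsmooth : ∀ c : ℝ, ContDiff ℝ 2 (fun z => f z c))
    (FELR : (Fin D → ℝ) → ℝ)
    (hFELR : FELR = fun θ => (1 / N : ℝ) * ∑ n, f (x n ⬝ᵥ θ) (y n) + lam / 2 * (θ ⬝ᵥ θ))
    (FALR : (Fin D → ℝ) → ℝ)
    (hFALR : FALR = fun θ => (1 / N : ℝ) * ∑ n, f ((x n + ε n) ⬝ᵥ θ) (y n) + lam / 2 * (θ ⬝ᵥ θ))
    (θELR : Fin D → ℝ) (hθELR : ∀ θ, FELR θELR ≤ FELR θ)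
    (hθELRU : ∀ θ, (∀ θ', FELR θ ≤ FELR θ') → θ = θELR)
    (θALR : Fin D → ℝ) (hθALR : ∀ θ, FALR θALR ≤ FALR θ)
    (hθALRU : ∀ θ, (∀ θ', FALR θ ≤ FALR θ') → θ = θALR)
    (horth : ∀ m n : Fin N, x m ⬝ᵥ ε n = 0)
    (g : Fin D → ℝ)
    (hg : g = ∑ n, deriv (fun z => f z (y n)) (x n ⬝ᵥ θELR) • ε n) :
    Real.sqrt ((θELR - θALR) ⬝ᵥ (θELR - θALR)) ≤
      1 / (N * lam) * Real.sqrt (g ⬝ᵥ g) := by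
  classical
  have hNpos : (0:ℝ) < N := by exact_mod_cast hN
  have hdiff : ∀ c : ℝ, Differentiable ℝ (fun z => f z c) := fun c =>
    (hsmooth c).differentiable two_ne_zero
  set d : Fin N → ℝ → ℝ := fun n => deriv (fun z => f z (y n)) with hd
  -- dot product algebra along a line
  have dot1 : ∀ (a θ v : Fin D → ℝ) (t : ℝ), a ⬝ᵥ (θ + t • v) = a ⬝ᵥ θ + t * (a ⬝ᵥ v) := by
    intro a θ v t
    simp [dotProduct_add, dotProduct_smul, smul_eq_mul]
  have dot2 : ∀ (θ v : Fin D → ℝ) (t : ℝ),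
      (θ + t • v) ⬝ᵥ (θ + t • v) = θ ⬝ᵥ θ + 2 * (θ ⬝ᵥ v) * t + (v ⬝ᵥ v) * t ^ 2 := by
    intro θ v t
    simp [dotProduct_add, add_dotProduct, dotProduct_smul, smul_dotProduct, smul_eq_mul,
      dotProduct_comm v θ]
    ring
  -- derivative of the scalar composition
  have hder : ∀ (n : Fin N) (c b t : ℝ),
      HasDerivAt (fun t : ℝ => f (c + t * b) (y n)) (d n (c + t * b) * b) t := by
    intro n c b t
    have h1 : HasDerivAt (fun t : ℝ => c + t * b) b t := by
      simpa using ((hasDerivAt_id t).mul_const b).const_add c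
    exact ((hdiff (y n)) (c + t * b)).hasDerivAt.comp t h1
  -- generic first-order optimality condition
  have hgrad : ∀ (a : Fin N → Fin D → ℝ) (F : (Fin D → ℝ) → ℝ),
      (F = fun θ => (1 / N : ℝ) * ∑ n, f (a n ⬝ᵥ θ) (y n) + lam / 2 * (θ ⬝ᵥ θ)) →
      ∀ (θm : Fin D → ℝ), (∀ θ, F θm ≤ F θ) →
      ∀ v : Fin D → ℝ,
        (1 / N : ℝ) * ∑ n, d n (a n ⬝ᵥ θm) * (a n ⬝ᵥ v) + lam * (θm ⬝ᵥ v) = 0 := by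
    intro a F hF θm hm v
    have hmin : IsLocalMin (fun t : ℝ => F (θm + t • v)) 0 :=
      Filter.Eventually.of_forall fun t => by simpa using hm (θm + t • v)
    have heq : (fun t : ℝ => F (θm + t • v)) = fun t : ℝ =>
        (1 / N : ℝ) * ∑ n, f (a n ⬝ᵥ θm + t * (a n ⬝ᵥ v)) (y n)
          + lam / 2 * (θm ⬝ᵥ θm + 2 * (θm ⬝ᵥ v) * t + (v ⬝ᵥ v) * t ^ 2) := by
      funext t
      rw [hF]
      simp only [dot2]
      simp only [dot1]
    have hS : HasDerivAt (fun t : ℝ => ∑ n, f (a n ⬝ᵥ θm + t * (a n ⬝ᵥ v)) (y n))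
        (∑ n, d n (a n ⬝ᵥ θm + 0 * (a n ⬝ᵥ v)) * (a n ⬝ᵥ v)) 0 :=
      HasDerivAt.fun_sum fun n _ => hder n _ _ 0
    have hQ : HasDerivAt (fun t : ℝ => θm ⬝ᵥ θm + 2 * (θm ⬝ᵥ v) * t + (v ⬝ᵥ v) * t ^ 2)
        (2 * (θm ⬝ᵥ v) + (v ⬝ᵥ v) * (2 * 0)) 0 := by
      have h1 : HasDerivAt (fun t : ℝ => 2 * (θm ⬝ᵥ v) * t) (2 * (θm ⬝ᵥ v)) 0 := by
        simpa using (hasDerivAt_id (0:ℝ)).const_mul (2 * (θm ⬝ᵥ v))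
      have h2 : HasDerivAt (fun t : ℝ => (v ⬝ᵥ v) * t ^ 2) ((v ⬝ᵥ v) * (2 * 0)) 0 := by
        simpa using (hasDerivAt_pow 2 (0:ℝ)).const_mul (v ⬝ᵥ v)
      simpa using ((h1.const_add (θm ⬝ᵥ θm)).fun_add h2)
    have hDer : HasDerivAt (fun t : ℝ => F (θm + t • v))
        ((1 / N : ℝ) * ∑ n, d n (a n ⬝ᵥ θm + 0 * (a n ⬝ᵥ v)) * (a n ⬝ᵥ v)
          + lam / 2 * (2 * (θm ⬝ᵥ v) + (v ⬝ᵥ v) * (2 * 0))) 0 := by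
      rw [heq]
      exact (hS.const_mul (1 / N : ℝ)).add (hQ.const_mul (lam / 2))
    have h0 := hmin.hasDerivAt_eq_zero hDer
    simp only [zero_mul, add_zero, mul_zero] at h0
    linear_combination h0
  have gELR := hgrad x FELR hFELR θELR hθELR
  have gALR := hgrad (fun n => x n + ε n) FALR hFALR θALR hθALR
  -- θELR is orthogonal to every ε n
  have hperp : ∀ n, θELR ⬝ᵥ ε n = 0 := by
    intro n
    have h := gELR (ε n)
    have hz : ∀ m ∈ Finset.univ, d m (x m ⬝ᵥ θELR) * (x m ⬝ᵥ ε n) = (0:ℝ) := fun m _ => by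
      rw [horth m n, mul_zero]
    rw [Finset.sum_congr rfl hz, Finset.sum_const_zero, mul_zero, zero_add] at h
    rcases mul_eq_zero.mp h with h' | h'
    · exact absurd h' (ne_of_gt hlam)
    · exact h'
  -- the displacement vector
  set u : Fin D → ℝ := θALR - θELR with hu
  have hθu : θELR + u = θALR := by
    rw [hu]; abel
  set c : Fin N → ℝ := fun n => x n ⬝ᵥ θELR with hc
  set b : Fin N → ℝ := fun n => (x n + ε n) ⬝ᵥ u with hb
  have hcE : ∀ n, (x n + ε n) ⬝ᵥ θELR = c n := by
    intro n
    rw [add_dotProduct, dotProduct_comm (ε n) θELR, hperp n, add_zero, hc]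
  -- convexity of the pure loss along the segment
  have hterm : ∀ n : Fin N, ConvexOn ℝ Set.univ (fun t : ℝ => f (c n + t * b n) (y n)) := by
    intro n
    have h := (hconv (y n)).comp_affineMap
      (AffineMap.lineMap (c n) (c n + b n) : ℝ →ᵃ[ℝ] ℝ)
    simp only [AffineMap.coe_lineMap, Set.preimage_univ] at h
    have heq : (fun t : ℝ => f (c n + t * b n) (y n)) =
        ((fun z => f z (y n)) ∘ fun c_1 => c_1 • (c n + b n -ᵥ c n) +ᵥ c n) := by
      funext t
      simp only [Function.comp_apply, vsub_eq_sub, vadd_eq_add, smul_eq_mul]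
      congr 1
      ring
    rw [heq]
    exact h
  have hψconv : ConvexOn ℝ Set.univ (fun t : ℝ => ∑ n, f (c n + t * b n) (y n)) := by
    have hgen : ∀ s : Finset (Fin N),
        ConvexOn ℝ Set.univ (fun t : ℝ => ∑ n ∈ s, f (c n + t * b n) (y n)) := by
      intro s
      induction s using Finset.induction_on with
      | empty => simpa using convexOn_const (0:ℝ) convex_univ
      | insert _ _ hns ih =>
        simp only [Finset.sum_insert hns]
        exact (hterm _).add ih
    exact hgen Finset.univ
  have hψder : ∀ t : ℝ, HasDerivAt (fun t : ℝ => ∑ n, f (c n + t * b n) (y n))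
      (∑ n, d n (c n + t * b n) * b n) t := fun t =>
    HasDerivAt.fun_sum fun n _ => hder n _ _ t
  have hmono : deriv (fun t : ℝ => ∑ n, f (c n + t * b n) (y n)) 0 ≤
      deriv (fun t : ℝ => ∑ n, f (c n + t * b n) (y n)) 1 :=
    hψconv.monotoneOn_deriv (fun t _ => (hψder t).differentiableAt)
      (Set.mem_univ 0) (Set.mem_univ 1) zero_le_one
  rw [(hψder 0).deriv, (hψder 1).deriv] at hmono
  simp only [zero_mul, add_zero, one_mul] at hmono
  -- identify left-hand side
  have hsplit : ∑ n, d n (c n) * b n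
      = ∑ n, d n (c n) * (x n ⬝ᵥ u) + ∑ n, d n (c n) * (ε n ⬝ᵥ u) := by
    rw [← Finset.sum_add_distrib]
    refine Finset.sum_congr rfl fun n _ => ?_
    rw [hb]
    simp only [add_dotProduct]
    ring
  have sumdot : ∀ w : Fin N → Fin D → ℝ, (∑ n, w n) ⬝ᵥ u = ∑ n, w n ⬝ᵥ u := by
    intro w
    simp only [dotProduct, Finset.sum_apply, Finset.sum_mul]
    exact Finset.sum_comm
  have hgu : g ⬝ᵥ u = ∑ n, d n (c n) * (ε n ⬝ᵥ u) := by
    rw [hg, sumdot]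
    refine Finset.sum_congr rfl fun n _ => ?_
    rw [smul_dotProduct, smul_eq_mul]
  -- identify right-hand side
  have hright : ∀ n : Fin N, c n + b n = (x n + ε n) ⬝ᵥ θALR := by
    intro n
    rw [← hcE n, hb, ← dotProduct_add, hθu]
  have hELRu := gELR u
  have hALRu := gALR u
  have hmono2 : ∑ n, d n (c n) * b n ≤ ∑ n, d n ((x n + ε n) ⬝ᵥ θALR) * b n :=
    hmono.trans_eq (Finset.sum_congr rfl fun n _ => by rw [hright n])
  -- combine
  have key : lam * (u ⬝ᵥ u) ≤ (1 / N : ℝ) * (-(g ⬝ᵥ u)) := by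
    have h1 : (1 / N : ℝ) * ∑ n, d n (c n) * b n
        = -(lam * (θELR ⬝ᵥ u)) + (1 / N : ℝ) * (g ⬝ᵥ u) := by
      rw [hsplit, hgu]
      have : (1 / N : ℝ) * ∑ n, d n (c n) * (x n ⬝ᵥ u) = -(lam * (θELR ⬝ᵥ u)) := by
        linear_combination hELRu
      linear_combination this
    have h2 : (1 / N : ℝ) * ∑ n, d n ((x n + ε n) ⬝ᵥ θALR) * b n
        = -(lam * (θALR ⬝ᵥ u)) := by
      linear_combination hALRu
    have h3 := mul_le_mul_of_nonneg_left hmono2 (by positivity : (0:ℝ) ≤ 1 / N)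
    rw [h1, h2] at h3
    have h4 : (θALR - θELR) ⬝ᵥ u = u ⬝ᵥ u := by rw [hu]
    have h5 : θALR ⬝ᵥ u - θELR ⬝ᵥ u = u ⬝ᵥ u := by
      rw [← sub_dotProduct, h4]
    have h6 : lam * (θALR ⬝ᵥ u) - lam * (θELR ⬝ᵥ u) = lam * (u ⬝ᵥ u) := by
      rw [← mul_sub, h5]
    linarith [h3, h6]
  -- Cauchy–Schwarz
  have hCS : -(g ⬝ᵥ u) ≤ Real.sqrt (g ⬝ᵥ g) * Real.sqrt (u ⬝ᵥ u) := by
    have h := Real.sum_mul_le_sqrt_mul_sqrt Finset.univ (fun i => -g i) u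
    have e1 : ∑ i, (-g i) * u i = -(g ⬝ᵥ u) := by
      simp [dotProduct, ← Finset.sum_neg_distrib]
    have e2 : ∑ i, (-g i) ^ 2 = g ⬝ᵥ g := by simp [dotProduct, sq]
    have e3 : ∑ i, (u i) ^ 2 = u ⬝ᵥ u := by simp [dotProduct, sq]
    rw [e1, e2, e3] at h
    exact h
  set S := Real.sqrt (u ⬝ᵥ u) with hSdef
  set G := Real.sqrt (g ⬝ᵥ g) with hGdef
  have hunn : 0 ≤ u ⬝ᵥ u := Finset.sum_nonneg fun i _ => mul_self_nonneg _
  have huu : u ⬝ᵥ u = S ^ 2 := (Real.sq_sqrt hunn).symm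
  have hgoal_eq : (θELR - θALR) ⬝ᵥ (θELR - θALR) = u ⬝ᵥ u := by
    have : θELR - θALR = -u := by rw [hu]; abel
    rw [this, neg_dotProduct, dotProduct_neg, neg_neg]
  rw [hgoal_eq, ← hSdef]
  have hkey2 : lam * S ^ 2 ≤ (1 / N : ℝ) * (G * S) := by
    calc lam * S ^ 2 = lam * (u ⬝ᵥ u) := by rw [huu]
      _ ≤ (1 / N : ℝ) * (-(g ⬝ᵥ u)) := key
      _ ≤ (1 / N : ℝ) * (G * S) := by
          apply mul_le_mul_of_nonneg_left hCS (by positivity)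
  have hSnn : 0 ≤ S := Real.sqrt_nonneg _
  have hGnn : 0 ≤ G := Real.sqrt_nonneg _
  rcases lt_or_eq_of_le hSnn with hpos | h0
  · have hkey3 : (N : ℝ) * lam * S ^ 2 ≤ G * S := by
      have h := mul_le_mul_of_nonneg_left hkey2 (le_of_lt hNpos)
      calc (N : ℝ) * lam * S ^ 2 = (N:ℝ) * (lam * S ^ 2) := by ring
        _ ≤ (N:ℝ) * ((1 / N : ℝ) * (G * S)) := h
        _ = G * S := by field_simp
    have hNl : (0:ℝ) < (N:ℝ) * lam := mul_pos hNpos hlam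
    rw [show (1 : ℝ) / ((N:ℝ) * lam) * G = G / ((N:ℝ) * lam) by ring,
      le_div_iff₀ hNl]
    nlinarith [hkey3, hpos]
  · rw [← h0]
    positivity
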